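/- arXiv:1405.7304 — 3 statements merged into one kernel-verified Lean document; each statement's English description precedes it below -/
import Mathlib

section
/- For all positive integers n and k and every integer m ≥ 0, the polynomials q̃_m satisfy the three-term recurrence q̃_{m+1}(y) = (y − 2m(k − m − n/2 − 1/2) − (n/2)(k − 1) − k)·q̃_m(y) − m(m − k)(m + n/2)(m − k + n/2 − 1)·q̃_{m−1}(y), where q̃_{−1}(y) := 0 (and q̃_0(y) = 1). -/
/-- Pochhammer symbol `(a)_l = a(a+1)⋯(a+l-1)`, with `(a)_0 = 1`. -/
noncomputable def poch (a : ℝ) (l : ℕ) : ℝ := ∏ i ∈ Finset.range l, (a + i)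

/-- The polynomial `q̃_m(y) = Σ_{l=0}^m (−1)^{m−l} (n/2+1+l)_{m−l} (k−m)_{m−l} C(m,l)
Π_{j=1}^l (y − j²)`. -/
noncomputable def qt (n k m : ℕ) (y : ℝ) : ℝ :=
  ∑ l ∈ Finset.range (m + 1),
    (-1 : ℝ) ^ (m - l) * poch ((n : ℝ) / 2 + 1 + l) (m - l) * poch ((k : ℝ) - m) (m - l)
      * (m.choose l) * ∏ j ∈ Finset.range l, (y - ((j : ℝ) + 1) ^ 2)

noncomputable def pcoef (x t : ℝ) (m l : ℕ) : ℝ :=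
  (-1 : ℝ) ^ (m - l) * poch (x + 1 + l) (m - l) * poch (t - m) (m - l) * (m.choose l)

noncomputable def Pb (l : ℕ) (y : ℝ) : ℝ := ∏ j ∈ Finset.range l, (y - ((j : ℝ) + 1) ^ 2)

lemma qt_eq (n k m : ℕ) (y : ℝ) :
    qt n k m y = ∑ l ∈ Finset.range (m + 1), pcoef ((n : ℝ) / 2) (k : ℝ) m l * Pb l y := rfl

lemma poch_succ (a : ℝ) (l : ℕ) : poch a (l + 1) = poch a l * (a + l) :=
  Finset.prod_range_succ _ _

lemma poch_succ' (a : ℝ) (l : ℕ) : poch a (l + 1) = a * poch (a + 1) l := by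
  rw [poch, Finset.prod_range_succ']
  simp only [Nat.cast_zero, add_zero]
  rw [mul_comm, poch]
  refine congrArg₂ _ rfl (Finset.prod_congr rfl fun i _ => ?_)
  push_cast
  ring

lemma pcoef_zero_of_lt {x t : ℝ} {m l : ℕ} (h : m < l) : pcoef x t m l = 0 := by
  simp [pcoef, Nat.choose_eq_zero_of_lt h]

set_option maxHeartbeats 2000000 in
lemma key (x t : ℝ) (m l : ℕ) (hl : l ≤ m + 1) :
    pcoef x t (m + 1) l =
      (if l = 0 then 0 else pcoef x t m (l - 1))
      + (((l : ℝ) + 1) ^ 2 - (2 * m * (t - m - x - 1 / 2) + x * (t - 1) + t)) * pcoef x t m l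
      - ((m : ℝ) * ((m : ℝ) - t) * ((m : ℝ) + x) * ((m : ℝ) - t + x - 1))
          * (if m = 0 then 0 else pcoef x t (m - 1) l) := by
  rcases m with _ | m0
  · interval_cases l <;>
      simp [pcoef, poch, Finset.prod_range_succ, Finset.prod_range_one] <;> ring
  · by_cases h0 : l = 0
    · subst h0
      rw [if_pos rfl, if_neg (Nat.succ_ne_zero m0)]
      simp only [pcoef, Nat.add_sub_cancel, Nat.sub_zero, Nat.choose_zero_right, Nat.cast_one,
        mul_one, Nat.cast_zero, add_zero]
      push_cast
      rw [poch_succ (x+1) (m0+1), poch_succ (x+1) m0,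
        poch_succ' (t - ((m0:ℝ)+1+1)) (m0+1), poch_succ' (t - ((m0:ℝ)+1+1) + 1) m0,
        poch_succ' (t - ((m0:ℝ)+1)) m0,
        show t - ((m0:ℝ)+1+1) + 1 + 1 = t - m0 by ring,
        show t - ((m0:ℝ)+1) + 1 = t - m0 by ring,
        pow_succ (-1:ℝ) (m0+1), pow_succ (-1:ℝ) m0]
      push_cast
      ring
    · rw [if_neg h0, if_neg (Nat.succ_ne_zero m0)]
      rcases Nat.lt_or_ge l (m0+1) with hlt | hge
      · -- generic case 1 ≤ l ≤ m0
        obtain ⟨l', rfl⟩ : ∃ l', l = l' + 1 := ⟨l - 1, by omega⟩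
        obtain ⟨t0, rfl⟩ : ∃ t0, m0 = l' + 1 + t0 := ⟨m0 - (l'+1), by omega⟩
        simp only [pcoef, show l' + 1 + t0 + 1 + 1 - (l' + 1) = t0 + 1 + 1 by omega,
          show l' + 1 - 1 = l' from rfl,
          show l' + 1 + t0 + 1 - l' = t0 + 1 + 1 by omega,
          show l' + 1 + t0 + 1 - (l' + 1) = t0 + 1 by omega,
          show l' + 1 + t0 + 1 - 1 = l' + 1 + t0 from rfl,
          show l' + 1 + t0 - (l' + 1) = t0 by omega]
        push_cast
        rw [poch_succ (x + 1 + ((l':ℝ) + 1)) (t0 + 1), poch_succ (x + 1 + ((l':ℝ) + 1)) t0,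
          poch_succ' (x + 1 + (l':ℝ)) (t0 + 1), poch_succ (x + 1 + (l':ℝ) + 1) t0,
          poch_succ' (t - ((l':ℝ) + 1 + ↑t0 + 1 + 1)) (t0 + 1),
          poch_succ' (t - ((l':ℝ) + 1 + ↑t0 + 1 + 1) + 1) t0,
          poch_succ' (t - ((l':ℝ) + 1 + ↑t0 + 1)) (t0 + 1),
          poch_succ (t - ((l':ℝ) + 1 + ↑t0 + 1) + 1) t0,
          poch_succ' (t - ((l':ℝ) + 1 + ↑t0 + 1)) t0,
          show x + 1 + (l':ℝ) + 1 = x + 1 + ((l':ℝ) + 1) by ring,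
          show t - ((l':ℝ) + 1 + ↑t0 + 1 + 1) + 1 + 1 = t - ((l':ℝ) + 1 + ↑t0) by ring,
          show t - ((l':ℝ) + 1 + ↑t0 + 1) + 1 = t - ((l':ℝ) + 1 + ↑t0) by ring,
          pow_succ (-1 : ℝ) (t0 + 1), pow_succ (-1 : ℝ) t0]
        push_cast
        -- choose relations
        have hr1 := Nat.choose_mul_succ_eq (l' + 1 + t0 + 1) (l' + 1)
        rw [show l' + 1 + t0 + 1 + 1 - (l' + 1) = t0 + 1 + 1 by omega] at hr1
        have hr2 := Nat.choose_mul_succ_eq (l' + 1 + t0) (l' + 1)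
        rw [show l' + 1 + t0 + 1 - (l' + 1) = t0 + 1 by omega] at hr2
        have hr3 := Nat.choose_succ_right_eq (l' + 1 + t0 + 1) l'
        rw [show l' + 1 + t0 + 1 - l' = t0 + 1 + 1 by omega] at hr3
        have r1 : ((l' + 1 + t0 + 1).choose (l' + 1) : ℝ) * ((l':ℝ) + 1 + t0 + 1 + 1)
            = ((l' + 1 + t0 + 1 + 1).choose (l' + 1) : ℝ) * ((t0:ℝ) + 1 + 1) := by
          exact_mod_cast congrArg (Nat.cast : ℕ → ℝ) hr1
        have r2 : ((l' + 1 + t0).choose (l' + 1) : ℝ) * ((l':ℝ) + 1 + t0 + 1)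
            = ((l' + 1 + t0 + 1).choose (l' + 1) : ℝ) * ((t0:ℝ) + 1) := by
          exact_mod_cast congrArg (Nat.cast : ℕ → ℝ) hr2
        have r3 : ((l' + 1 + t0 + 1).choose (l' + 1) : ℝ) * ((l':ℝ) + 1)
            = ((l' + 1 + t0 + 1).choose l' : ℝ) * ((t0:ℝ) + 1 + 1) := by
          exact_mod_cast congrArg (Nat.cast : ℕ → ℝ) hr3
        have e1 : ((l' + 1 + t0 + 1 + 1).choose (l' + 1) : ℝ)
            = ((l' + 1 + t0 + 1).choose (l' + 1) : ℝ) * ((l':ℝ) + 1 + t0 + 1 + 1) / ((t0:ℝ) + 1 + 1) := by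
          rw [eq_div_iff (by positivity)]; linear_combination -r1
        have e3 : ((l' + 1 + t0 + 1).choose l' : ℝ)
            = ((l' + 1 + t0 + 1).choose (l' + 1) : ℝ) * ((l':ℝ) + 1) / ((t0:ℝ) + 1 + 1) := by
          rw [eq_div_iff (by positivity)]; linear_combination -r3
        have e4 : ((l' + 1 + t0).choose (l' + 1) : ℝ)
            = ((l' + 1 + t0 + 1).choose (l' + 1) : ℝ) * ((t0:ℝ) + 1) / ((l':ℝ) + 1 + t0 + 1) := by
          rw [eq_div_iff (by positivity)]; linear_combination r2
        rw [e1, e3, e4]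
        set A := poch (x + 1 + ((l':ℝ) + 1)) t0 with hA
        set B := poch (t - ((l':ℝ) + 1 + ↑t0)) t0 with hB
        set c2 : ℝ := ((l' + 1 + t0 + 1).choose (l' + 1) : ℝ) with hc2
        set s : ℝ := (-1 : ℝ) ^ t0 with hs
        set L : ℝ := (l' : ℝ) with hL
        set T : ℝ := (t0 : ℝ) with hT
        have hT2 : T + 1 + 1 ≠ 0 := by positivity
        have hM : L + 1 + T + 1 ≠ 0 := by positivity
        field_simp
        ring
      · have : l = m0 + 1 ∨ l = m0 + 2 := by omega
        rcases this with rfl | rfl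
        · -- l = m0 + 1
          have hz : pcoef x t m0 (m0 + 1) = 0 := pcoef_zero_of_lt (by omega)
          simp only [Nat.add_sub_cancel]
          rw [hz]
          simp only [pcoef, show m0 + 1 + 1 - (m0 + 1) = 1 by omega,
            show m0 + 1 - 1 = m0 from rfl, show m0 + 1 - m0 = 1 by omega,
            Nat.sub_self, Nat.choose_succ_self_right, Nat.choose_self]
          simp only [poch, Finset.prod_range_one, Finset.prod_range_zero, Nat.cast_zero,
            add_zero, pow_zero, pow_one, Nat.cast_one]
          push_cast
          ring
        · -- l = m0 + 2
          have h1 : pcoef x t (m0 + 1) (m0 + 2) = 0 := pcoef_zero_of_lt (by omega)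
          have h2 : pcoef x t m0 (m0 + 2) = 0 := pcoef_zero_of_lt (by omega)
          have h3 : pcoef x t (m0 + 1 + 1) (m0 + 2) = 1 := by
            simp [pcoef, poch, Nat.sub_self]
          have h4 : pcoef x t (m0 + 1) (m0 + 1) = 1 := by
            simp [pcoef, poch, Nat.sub_self]
          simp only [Nat.add_sub_cancel, show m0 + 2 - 1 = m0 + 1 by omega]
          rw [h1, h2, h3, h4]
          ring

lemma Pb_succ (l : ℕ) (y : ℝ) : Pb (l + 1) y = Pb l y * (y - ((l : ℝ) + 1) ^ 2) :=
  Finset.prod_range_succ _ _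

lemma recc (x t : ℝ) (m : ℕ) (y : ℝ) :
    (∑ l ∈ Finset.range (m + 2), pcoef x t (m + 1) l * Pb l y)
    = (y - (2 * m * (t - m - x - 1 / 2) + x * (t - 1) + t))
        * (∑ l ∈ Finset.range (m + 1), pcoef x t m l * Pb l y)
      - ((m : ℝ) * ((m : ℝ) - t) * ((m : ℝ) + x) * ((m : ℝ) - t + x - 1))
        * (if m = 0 then 0 else ∑ l ∈ Finset.range m, pcoef x t (m - 1) l * Pb l y) := by
  have h1 : ∀ l ∈ Finset.range (m + 2), pcoef x t (m + 1) l * Pb l y =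
      (if l = 0 then 0 else pcoef x t m (l - 1) * Pb l y)
      + (((((l : ℝ) + 1) ^ 2 - (2 * m * (t - m - x - 1 / 2) + x * (t - 1) + t))
            * (pcoef x t m l * Pb l y))
        - ((m : ℝ) * ((m : ℝ) - t) * ((m : ℝ) + x) * ((m : ℝ) - t + x - 1))
            * (if m = 0 then 0 else pcoef x t (m - 1) l * Pb l y)) := by
    intro l hl
    rw [key x t m l (by have := Finset.mem_range.mp hl; omega)]
    split_ifs <;> ring
  rw [Finset.sum_congr rfl h1, Finset.sum_add_distrib, Finset.sum_sub_distrib]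
  have hS1 : (∑ l ∈ Finset.range (m + 2),
        if l = 0 then 0 else pcoef x t m (l - 1) * Pb l y)
      = ∑ l ∈ Finset.range (m + 1), pcoef x t m l * Pb (l + 1) y := by
    rw [Finset.sum_range_succ']
    simp
  have hS2 : (∑ l ∈ Finset.range (m + 2),
        (((l : ℝ) + 1) ^ 2 - (2 * m * (t - m - x - 1 / 2) + x * (t - 1) + t))
          * (pcoef x t m l * Pb l y))
      = ∑ l ∈ Finset.range (m + 1),
        (((l : ℝ) + 1) ^ 2 - (2 * m * (t - m - x - 1 / 2) + x * (t - 1) + t))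
          * (pcoef x t m l * Pb l y) := by
    rw [Finset.sum_range_succ, pcoef_zero_of_lt (Nat.lt_succ_self m)]
    ring
  have hS3 : (∑ l ∈ Finset.range (m + 2),
        ((m : ℝ) * ((m : ℝ) - t) * ((m : ℝ) + x) * ((m : ℝ) - t + x - 1))
          * (if m = 0 then 0 else pcoef x t (m - 1) l * Pb l y))
      = ((m : ℝ) * ((m : ℝ) - t) * ((m : ℝ) + x) * ((m : ℝ) - t + x - 1))
        * (if m = 0 then 0 else ∑ l ∈ Finset.range m, pcoef x t (m - 1) l * Pb l y) := by
    by_cases hm : m = 0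
    · simp [hm]
    · simp only [if_neg hm, ← Finset.mul_sum]
      congr 1
      rw [Finset.sum_subset (Finset.range_subset_range.mpr (by omega : m ≤ m + 2))]
      intro l hl hnl
      rw [pcoef_zero_of_lt (by simp only [Finset.mem_range] at hl hnl; omega), zero_mul]
  rw [hS1, hS2, hS3]
  have hfin : (∑ l ∈ Finset.range (m + 1), pcoef x t m l * Pb (l + 1) y)
      + (∑ l ∈ Finset.range (m + 1),
          (((l : ℝ) + 1) ^ 2 - (2 * m * (t - m - x - 1 / 2) + x * (t - 1) + t))
            * (pcoef x t m l * Pb l y))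
      = (y - (2 * m * (t - m - x - 1 / 2) + x * (t - 1) + t))
          * ∑ l ∈ Finset.range (m + 1), pcoef x t m l * Pb l y := by
    rw [← Finset.sum_add_distrib, Finset.mul_sum]
    exact Finset.sum_congr rfl fun l hl => by rw [Pb_succ]; ring
  linear_combination hfin

/-- The three-term recurrence for `q̃_m`, with `q̃_{-1} := 0`. -/
theorem stmt0 (n k : ℕ) (hn : 0 < n) (hk : 0 < k) (m : ℕ) (y : ℝ) :
    qt n k (m + 1) y
      = (y - 2 * (m : ℝ) * ((k : ℝ) - m - (n : ℝ) / 2 - 1 / 2)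
            - (n : ℝ) / 2 * ((k : ℝ) - 1) - k) * qt n k m y
        - (m : ℝ) * ((m : ℝ) - k) * ((m : ℝ) + (n : ℝ) / 2) * ((m : ℝ) - k + (n : ℝ) / 2 - 1)
            * (if m = 0 then 0 else qt n k (m - 1) y) := by
  have h := recc ((n : ℝ) / 2) (k : ℝ) m y
  rcases Nat.eq_zero_or_pos m with rfl | hm
  · simp only [if_pos rfl, mul_zero, sub_zero] at h ⊢
    rw [qt_eq, qt_eq, show (0 : ℕ) + 2 = 0 + 1 + 1 from rfl, h]
    push_cast
    ring
  · obtain ⟨m0, rfl⟩ : ∃ m0, m = m0 + 1 := ⟨m - 1, by omega⟩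
    rw [if_neg (Nat.succ_ne_zero m0)] at h ⊢
    rw [qt_eq, qt_eq, qt_eq, Nat.add_sub_cancel,
      show m0 + 1 + 1 = m0 + 2 from rfl, h, Nat.add_sub_cancel,
      show m0 + 1 = m0 + 0 + 1 from rfl]
    push_cast
    ring
end

section
/- In the polynomial ring ℤ[x,c], for every integer N ≥ 0 the element D_N := x·Π_{j=1}^N (x² − j²·c) lies in the subsemiring generated by {M_0, M_1, …, M_N}, where M_k := (−1)^k (k!)² c^k x; that is, D_N can be written as a polynomial with natural-number coefficients in M_0, …, M_N. -/
open MvPolynomial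

/-- `M_k := (−1)^k (k!)² c^k x` in `ℤ[x,c]`, where `x = X 0` and `c = X 1`. -/
noncomputable def Mop (k : ℕ) : MvPolynomial (Fin 2) ℤ :=
  C ((-1 : ℤ) ^ k * (k.factorial : ℤ) ^ 2) * (X 1) ^ k * X 0

/-- `D_N := x·Π_{j=1}^N (x² − j²·c)` in `ℤ[x,c]`, where `x = X 0` and `c = X 1`. -/
noncomputable def Dop (N : ℕ) : MvPolynomial (Fin 2) ℤ :=
  X 0 * ∏ j ∈ Finset.range N, ((X 0) ^ 2 - C (((j : ℤ) + 1) ^ 2) * X 1)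

/-- `m_k := (−c)^k x`, so that `M_k = (k!)² • m_k`. -/
noncomputable def mP (k : ℕ) : MvPolynomial (Fin 2) ℤ :=
  (- X 1) ^ k * X 0

lemma mP_zero : mP 0 = X 0 := by simp [mP]

lemma Mop_eq_smul_mP (k : ℕ) : Mop k = (k.factorial ^ 2) • mP k := by
  rw [Mop, mP, nsmul_eq_mul, neg_pow (X 1 : MvPolynomial (Fin 2) ℤ)]
  simp only [map_mul, map_pow, map_neg, map_one, C_eq_coe_nat]
  push_cast
  ring

lemma Mop_zero : Mop 0 = X 0 := by simp [Mop]

lemma Dop_zero : Dop 0 = X 0 := by simp [Dop]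

lemma Dop_succ (N : ℕ) :
    Dop (N + 1) =
      ((X 0) ^ 2 - C (((N : ℤ) + 1) ^ 2) * X 1) * Dop N := by
  simp only [Dop, Finset.prod_range_succ]
  ring

/-- The key identity:
`D_{N+1} = Σ_{k=0}^{N} ((N+1)⋯(N+2−k))² m_k x D_{N−k} + ((N+1)!)² m_{N+1}`. -/
lemma keyG (N : ℕ) :
    Dop (N + 1) =
      (∑ k ∈ Finset.range (N + 1),
          ((N + 1).descFactorial k) ^ 2 • (mP k * X 0 * Dop (N - k)))
        + ((N + 1).factorial) ^ 2 • mP (N + 1) := by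
  induction N with
  | zero =>
      rw [Dop_succ, Dop_zero, Finset.sum_range_one]
      simp only [Nat.descFactorial_zero, one_pow, one_smul, Nat.sub_zero, Dop_zero,
        Nat.factorial_one, mP, pow_zero, pow_one, one_mul, Nat.cast_zero, zero_add,
        map_one]
      ring
  | succ N ih =>
      have hC : ∀ j : ℕ, (C (((j : ℤ) + 1) ^ 2) : MvPolynomial (Fin 2) ℤ)
          = ((j : MvPolynomial (Fin 2) ℤ) + 1) ^ 2 := by
        intro j
        rw [map_pow, map_add, map_one, C_eq_coe_nat]
      -- Peel the `k = 0` term from the sum on the RHS.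
      rw [Finset.sum_range_succ' _ (N + 1)]
      simp only [Nat.descFactorial_zero, one_pow, one_smul, Nat.sub_zero, mP_zero,
        Nat.succ_sub_succ]
      rw [Dop_succ (N + 1), ih]
      set S : MvPolynomial (Fin 2) ℤ :=
        ∑ k ∈ Finset.range (N + 1),
          ((N + 1).descFactorial k) ^ 2 • (mP k * X 0 * Dop (N - k)) with hS
      set T : MvPolynomial (Fin 2) ℤ :=
        ((N + 1).factorial) ^ 2 • mP (N + 1) with hT
      have h1 : ∑ k ∈ Finset.range (N + 1),
          ((N + 2).descFactorial (k + 1)) ^ 2 • (mP (k + 1) * X 0 * Dop (N - k))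
          = (((N : MvPolynomial (Fin 2) ℤ) + 2) ^ 2 * (- X 1)) * S := by
        rw [hS, Finset.mul_sum]
        refine Finset.sum_congr rfl fun k _ => ?_
        rw [Nat.succ_descFactorial_succ]
        simp only [mP, nsmul_eq_mul, pow_succ]
        push_cast
        ring
      have h2 : ((N + 2).factorial) ^ 2 • (mP (N + 1 + 1))
          = (((N : MvPolynomial (Fin 2) ℤ) + 2) ^ 2 * (- X 1)) * T := by
        rw [hT, Nat.factorial_succ]
        simp only [mP, nsmul_eq_mul, pow_succ]
        push_cast
        ring
      rw [h1, h2, hC]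
      push_cast
      ring

lemma Dop_mem : ∀ N : ℕ,
    Dop N ∈ Subsemiring.closure (Mop '' Set.Iic N) := by
  intro N
  induction N using Nat.strong_induction_on with
  | _ N ih =>
    match N with
    | 0 =>
        rw [Dop_zero, ← Mop_zero]
        exact Subsemiring.subset_closure ⟨0, Set.mem_Iic.mpr le_rfl, rfl⟩
    | N + 1 =>
        rw [keyG N]
        refine add_mem (Subsemiring.sum_mem _ fun k hk => ?_) ?_
        · -- `d² • (m_k x D_{N−k})` with `d = (N+1).descFactorial k = k! * C(N+1,k)`
          rw [Nat.descFactorial_eq_factorial_mul_choose,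
            Nat.mul_comm (Nat.factorial k), mul_pow, mul_smul,
            show (Nat.factorial k) ^ 2 • (mP k * X 0 * Dop (N - k))
                = Mop k * X 0 * Dop (N - k) from by
              rw [Mop_eq_smul_mP, smul_mul_assoc, smul_mul_assoc],
            ← Mop_zero]
          refine nsmul_mem (mul_mem (mul_mem ?_ ?_) ?_) _
          · exact Subsemiring.subset_closure
              ⟨k, Set.mem_Iic.mpr (le_trans (Nat.le_of_lt_succ
                (Finset.mem_range.mp hk)) (Nat.le_succ N)), rfl⟩
          · exact Subsemiring.subset_closure ⟨0, Set.mem_Iic.mpr (Nat.zero_le _), rfl⟩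
          · exact Subsemiring.closure_mono
              (Set.image_mono (Set.Iic_subset_Iic.mpr
                (le_trans (Nat.sub_le N k) (Nat.le_succ N)))) (ih (N - k)
                (Nat.lt_succ_of_le (Nat.sub_le N k)))
        · rw [show ((N + 1).factorial) ^ 2 • mP (N + 1) = Mop (N + 1) from
            (Mop_eq_smul_mP (N + 1)).symm]
          exact Subsemiring.subset_closure ⟨N + 1, Set.mem_Iic.mpr le_rfl, rfl⟩

/-- `D_N` is a polynomial with natural-number coefficients in `M_0, …, M_N`. -/
theorem stmt14 (N : ℕ) :
    ∃ P : MvPolynomial (Fin (N + 1)) ℕ,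
      MvPolynomial.aeval (fun k : Fin (N + 1) => Mop (k : ℕ)) P = Dop N := by
  have hle : Subsemiring.closure (Mop '' Set.Iic N) ≤
      (MvPolynomial.aeval (R := ℕ)
        (fun k : Fin (N + 1) => Mop (k : ℕ))).range.toSubsemiring := by
    apply Subsemiring.closure_le.mpr
    rintro p ⟨k, hk, rfl⟩
    exact ⟨X ⟨k, Nat.lt_succ_of_le hk⟩, aeval_X _ _⟩
  have h := hle (Dop_mem N)
  rw [Subalgebra.mem_toSubsemiring, AlgHom.mem_range] at h
  exact h
end

section
/- In the polynomial ring ℤ[x,c], for every integer N ≥ 0 the element M_N := (−1)^N (N!)² c^N x lies in the subring generated by {D_0, D_1, …, D_N}, where D_k := x·Π_{j=1}^k (x² − j²·c); that is, M_N can be written as a polynomial with integer coefficients in D_0, …, D_N. -/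
open MvPolynomial

/-- `∏_{j ∈ [v, v+l)} (j+1) · v! = (v+l)!` -/
lemma prod_Ico_mul_factorial (v l : ℕ) :
    (∏ j ∈ Finset.Ico v (v + l), (j + 1)) * v.factorial = (v + l).factorial := by
  induction l with
  | zero => simp
  | succ l ih =>
    have h1 : ∏ j ∈ Finset.Ico v (v + (l + 1)), (j + 1)
        = (∏ j ∈ Finset.Ico v (v + l), (j + 1)) * (v + l + 1) := by
      rw [show v + (l + 1) = (v + l) + 1 from rfl]
      exact Finset.prod_Ico_succ_top (by omega) _
    rw [h1, show v + (l + 1) = (v + l) + 1 from rfl, Nat.factorial_succ,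
      mul_right_comm, ih, mul_comm]

lemma factorial_dvd_prod_Ico (v l : ℕ) :
    l.factorial ∣ ∏ j ∈ Finset.Ico v (v + l), (j + 1) := by
  have h1 : l.factorial * v.factorial ∣ (v + l).factorial := by
    rw [add_comm]; exact Nat.factorial_mul_factorial_dvd_factorial_add l v
  rw [← prod_Ico_mul_factorial v l] at h1
  exact (Nat.mul_dvd_mul_iff_right v.factorial_pos).mp h1

lemma prod_range_add_one (N : ℕ) :
    (∏ j ∈ Finset.range N, (j + 1)) = N.factorial := by
  have h := prod_Ico_mul_factorial 0 N
  rw [Nat.factorial_zero, mul_one, zero_add] at h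
  rw [Finset.range_eq_Ico]
  exact h

/-- Key combinatorial lemma. -/
lemma helper (A : Subalgebra ℤ (MvPolynomial (Fin 2) ℤ))
    (hx : (X 0 : MvPolynomial (Fin 2) ℤ) ∈ A) (B : ℕ)
    (hM : ∀ l, 1 ≤ l → l ≤ B →
      (C ((l.factorial : ℤ) ^ 2) * (X 1) ^ l * X 0 : MvPolynomial (Fin 2) ℤ) ∈ A) :
    ∀ N' : ℕ, ∀ T : Finset ℕ, T ⊆ Finset.range N' → T.card ≤ B →
      ∀ s : ℕ, 2 * (N' - T.card) + 1 ≤ s →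
      (C (((∏ j ∈ T, (j + 1) : ℕ) : ℤ) ^ 2) * (X 1) ^ T.card * (X 0) ^ s :
        MvPolynomial (Fin 2) ℤ) ∈ A := by
  have hCmem : ∀ z : ℤ, (C z : MvPolynomial (Fin 2) ℤ) ∈ A := by
    intro z
    rw [← MvPolynomial.algebraMap_eq]
    exact A.algebraMap_mem z
  have hM' : ∀ l, l ≤ B →
      (C ((l.factorial : ℤ) ^ 2) * (X 1) ^ l * X 0 : MvPolynomial (Fin 2) ℤ) ∈ A := by
    intro l hl
    rcases Nat.eq_zero_or_pos l with h0 | h0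
    · subst h0; simpa using hx
    · exact hM l h0 hl
  intro N'
  induction N' using Nat.strong_induction_on with
  | _ N' ih =>
    intro T hT hTB s hs
    rcases T.eq_empty_or_nonempty with hTe | hTne
    · subst hTe
      simpa using pow_mem hx s
    have hs1 : 1 ≤ s := le_trans (by omega) hs
    obtain ⟨s', rfl⟩ : ∃ s', s = s' + 1 := ⟨s - 1, by omega⟩
    by_cases hU : Finset.range N' \ T = ∅
    · -- T = range N'
      have hTfull : T = Finset.range N' := by
        apply Finset.Subset.antisymm hT
        intro j hj
        by_contra hjT
        exact (Finset.eq_empty_iff_forall_notMem.mp hU j) (Finset.mem_sdiff.mpr ⟨hj, hjT⟩)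
      subst hTfull
      simp only [Finset.card_range] at hTB ⊢
      rw [prod_range_add_one]
      have hN1 : 1 ≤ N' := by
        rcases hTne with ⟨j, hj⟩; have := Finset.mem_range.mp hj; omega
      have hrw : (C ((N'.factorial : ℤ) ^ 2) * X 1 ^ N' * (X 0) ^ (s' + 1) :
            MvPolynomial (Fin 2) ℤ)
          = (C ((N'.factorial : ℤ) ^ 2) * X 1 ^ N' * X 0) * (X 0) ^ s' := by ring
      rw [hrw]
      exact mul_mem (hM N' hN1 hTB) (pow_mem hx _)
    · -- there is a gap; v = max gap position
      have hUne : (Finset.range N' \ T).Nonempty := Finset.nonempty_iff_ne_empty.mpr hU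
      set v := (Finset.range N' \ T).max' hUne with hv
      have hvmem := (Finset.range N' \ T).max'_mem hUne
      have hvN : v < N' := Finset.mem_range.mp (Finset.mem_sdiff.mp hvmem).1
      have hvT : v ∉ T := (Finset.mem_sdiff.mp hvmem).2
      have hvmax : ∀ w, w ∈ Finset.range N' \ T → w ≤ v :=
        fun w hw => Finset.le_max' _ w hw
      have hrun : ∀ w, v < w → w < N' → w ∈ T := by
        intro w hw1 hw2
        by_contra hwT
        have := hvmax w (Finset.mem_sdiff.mpr ⟨Finset.mem_range.mpr hw2, hwT⟩)
        omega
      set l := N' - (v + 1) with hl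
      have hNvl : N' = v + 1 + l := by omega
      set T' := T ∩ Finset.range v with hT'
      have hT'sub : T' ⊆ Finset.range v := Finset.inter_subset_right
      have hsplit : T = T' ∪ Finset.Ico (v + 1) (v + 1 + l) := by
        ext j
        simp only [hT', Finset.mem_union, Finset.mem_inter, Finset.mem_range, Finset.mem_Ico]
        constructor
        · intro hj
          have hjN : j < N' := Finset.mem_range.mp (hT hj)
          rcases lt_trichotomy j v with h | h | h
          · exact Or.inl ⟨hj, h⟩
          · exact absurd (h ▸ hj) hvT
          · right; omega
        · rintro (⟨hj, _⟩ | ⟨h1, h2⟩)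
          · exact hj
          · exact hrun j h1 (by omega)
      have hdisj : Disjoint T' (Finset.Ico (v + 1) (v + 1 + l)) := by
        apply Finset.disjoint_left.mpr
        intro j hj hj2
        have := Finset.mem_range.mp (hT'sub hj)
        have := (Finset.mem_Ico.mp hj2).1
        omega
      have hcard : T.card = T'.card + l := by
        rw [hsplit, Finset.card_union_of_disjoint hdisj, Nat.card_Ico]
        congr 1
        omega
      have hprodsplit : (∏ j ∈ T, (j + 1) : ℕ) =
          (∏ j ∈ T', (j + 1)) * (∏ j ∈ Finset.Ico (v + 1) (v + 1 + l), (j + 1)) := by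
        rw [hsplit, Finset.prod_union hdisj]
      obtain ⟨q, hq⟩ := factorial_dvd_prod_Ico (v + 1) l
      have hT'v : T'.card ≤ v := by
        have := Finset.card_le_card hT'sub
        simpa using this
      have hTcardN : T.card ≤ N' := by
        have := Finset.card_le_card hT
        simpa using this
      have hsbound : 2 * (v - T'.card) + 1 ≤ s' := by omega
      have hIH := ih v hvN T' hT'sub (by omega) s' hsbound
      have hMl := hM' l (by omega)
      have key : (C (((∏ j ∈ T, (j + 1) : ℕ) : ℤ) ^ 2) * (X 1) ^ T.card *
            (X 0) ^ (s' + 1) : MvPolynomial (Fin 2) ℤ) =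
          C ((q : ℤ) ^ 2) *
            (C (((∏ j ∈ T', (j + 1) : ℕ) : ℤ) ^ 2) * (X 1) ^ T'.card * (X 0) ^ s') *
            (C ((l.factorial : ℤ) ^ 2) * (X 1) ^ l * X 0) := by
        rw [hprodsplit, hq, hcard]
        push_cast
        rw [mul_pow, mul_pow, C_mul, C_mul]
        ring
      rw [key]
      exact mul_mem (mul_mem (hCmem _) hIH) hMl

lemma Mop_mem (N : ℕ) : Mop N ∈ Algebra.adjoin ℤ (Dop '' Set.Iic N) := by
  induction N using Nat.strong_induction_on with
  | _ N ih =>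
  set A := Algebra.adjoin ℤ (Dop '' Set.Iic N) with hA
  have hCmem : ∀ z : ℤ, (C z : MvPolynomial (Fin 2) ℤ) ∈ A := by
    intro z
    rw [← MvPolynomial.algebraMap_eq]
    exact A.algebraMap_mem z
  have hDmem : ∀ k, k ≤ N → Dop k ∈ A :=
    fun k hk => Algebra.subset_adjoin ⟨k, hk, rfl⟩
  have hx : (X 0 : MvPolynomial (Fin 2) ℤ) ∈ A := by
    have h0 : Dop 0 = X 0 := by simp [Dop]
    exact h0 ▸ hDmem 0 N.zero_le
  rcases Nat.eq_zero_or_pos N with hN0 | hN1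
  · subst hN0
    have h : Mop 0 = X 0 := by simp [Mop]
    rw [h]; exact hx
  have hM : ∀ l, 1 ≤ l → l ≤ N - 1 →
      (C ((l.factorial : ℤ) ^ 2) * (X 1) ^ l * X 0 : MvPolynomial (Fin 2) ℤ) ∈ A := by
    intro l _ hl
    have hlN : l < N := by omega
    have h1 : Mop l ∈ A := by
      refine Algebra.adjoin_mono ?_ (ih l hlN)
      exact Set.image_mono (Set.Iic_subset_Iic.mpr hlN.le)
    have h2 : (C ((l.factorial : ℤ) ^ 2) * (X 1) ^ l * X 0 : MvPolynomial (Fin 2) ℤ) =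
        C ((-1 : ℤ) ^ l) * Mop l := by
      rw [Mop, ← mul_assoc, ← mul_assoc, ← C_mul, ← mul_assoc, ← pow_add, ← two_mul,
        pow_mul]
      norm_num
    rw [h2]
    exact mul_mem (hCmem _) h1
  -- expansion of Dop N
  have expand : Dop N = ∑ t ∈ (Finset.range N).powerset,
      C ((-1 : ℤ) ^ t.card * ((∏ j ∈ t, (j + 1) : ℕ) : ℤ) ^ 2) * (X 1) ^ t.card *
        (X 0) ^ (2 * (N - t.card) + 1) := by
    rw [Dop]
    have hfact : ∀ j : ℕ, j ∈ Finset.range N →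
        ((X 0 : MvPolynomial (Fin 2) ℤ) ^ 2 - C (((j : ℤ) + 1) ^ 2) * X 1)
        = (-(C (((j : ℤ) + 1) ^ 2) * X 1)) + (X 0) ^ 2 := fun j _ => by ring
    rw [Finset.prod_congr rfl hfact, Finset.prod_add, Finset.mul_sum]
    apply Finset.sum_congr rfl
    intro t ht
    have htsub : t ⊆ Finset.range N := Finset.mem_powerset.mp ht
    have hz : (∏ j ∈ t, -(((j : ℤ) + 1) ^ 2)) =
        (-1 : ℤ) ^ t.card * ((∏ j ∈ t, (j + 1) : ℕ) : ℤ) ^ 2 := by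
      push_cast
      calc ∏ j ∈ t, -(((j : ℤ) + 1) ^ 2)
          = ∏ j ∈ t, ((-1) * ((j : ℤ) + 1) ^ 2) :=
            Finset.prod_congr rfl fun j _ => by ring
        _ = ((-1 : ℤ) ^ t.card) * ∏ j ∈ t, ((j : ℤ) + 1) ^ 2 := by
            rw [Finset.prod_mul_distrib, Finset.prod_const]
        _ = (-1 : ℤ) ^ t.card * (∏ j ∈ t, ((j : ℤ) + 1)) ^ 2 := by
            rw [Finset.prod_pow]
    have h1 : (∏ j ∈ t, (-(C (((j : ℤ) + 1) ^ 2) * X 1)) : MvPolynomial (Fin 2) ℤ) =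
        C ((-1 : ℤ) ^ t.card * ((∏ j ∈ t, (j + 1) : ℕ) : ℤ) ^ 2) * (X 1) ^ t.card := by
      calc (∏ j ∈ t, (-(C (((j : ℤ) + 1) ^ 2) * X 1)) : MvPolynomial (Fin 2) ℤ)
          = ∏ j ∈ t, (C (-(((j : ℤ) + 1) ^ 2)) * X 1) :=
            Finset.prod_congr rfl fun j _ => by rw [map_neg]; ring
        _ = (∏ j ∈ t, C (-(((j : ℤ) + 1) ^ 2))) * (X 1) ^ t.card := by
            rw [Finset.prod_mul_distrib, Finset.prod_const]
        _ = C (∏ j ∈ t, -(((j : ℤ) + 1) ^ 2)) * (X 1) ^ t.card := by rw [map_prod]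
        _ = C ((-1 : ℤ) ^ t.card * ((∏ j ∈ t, (j + 1) : ℕ) : ℤ) ^ 2) * (X 1) ^ t.card := by
            rw [hz]
    have h2 : (∏ _j ∈ Finset.range N \ t, ((X 0 : MvPolynomial (Fin 2) ℤ)) ^ 2) =
        (X 0 : MvPolynomial (Fin 2) ℤ) ^ (2 * (N - t.card)) := by
      rw [Finset.prod_const, Finset.card_sdiff_of_subset htsub, Finset.card_range, ← pow_mul]
    rw [h1, h2]
    ring
  -- split off the full subset, whose term is Mop N
  have hfullmem : Finset.range N ∈ (Finset.range N).powerset := Finset.mem_powerset_self _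
  have hterm_full : (C ((-1 : ℤ) ^ (Finset.range N).card *
        ((∏ j ∈ Finset.range N, (j + 1) : ℕ) : ℤ) ^ 2) * (X 1) ^ (Finset.range N).card *
        (X 0) ^ (2 * (N - (Finset.range N).card) + 1) : MvPolynomial (Fin 2) ℤ) = Mop N := by
    rw [Mop, Finset.card_range, prod_range_add_one, Nat.sub_self, Nat.mul_zero, zero_add,
      pow_one]
  have hsum := Finset.add_sum_erase (Finset.range N).powerset
    (fun t => (C ((-1 : ℤ) ^ t.card * ((∏ j ∈ t, (j + 1) : ℕ) : ℤ) ^ 2) * (X 1) ^ t.card *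
        (X 0) ^ (2 * (N - t.card) + 1) : MvPolynomial (Fin 2) ℤ)) hfullmem
  have hMopeq : Mop N = Dop N - ∑ t ∈ (Finset.range N).powerset.erase (Finset.range N),
      (C ((-1 : ℤ) ^ t.card * ((∏ j ∈ t, (j + 1) : ℕ) : ℤ) ^ 2) * (X 1) ^ t.card *
        (X 0) ^ (2 * (N - t.card) + 1) : MvPolynomial (Fin 2) ℤ) := by
    rw [expand, ← hsum]
    beta_reduce
    rw [hterm_full]
    ring
  rw [hMopeq]
  refine sub_mem (hDmem N le_rfl) (sum_mem ?_)
  intro t ht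
  have htne : t ≠ Finset.range N := (Finset.mem_erase.mp ht).1
  have htsub : t ⊆ Finset.range N :=
    Finset.mem_powerset.mp (Finset.mem_erase.mp ht).2
  have htcard : t.card < N := by
    have h := Finset.card_lt_card (lt_of_le_of_ne htsub (fun h => htne (by
      exact_mod_cast h)))
    simpa using h
  have happ := helper A hx (N - 1) hM N t htsub (by omega) (2 * (N - t.card) + 1) le_rfl
  have hre : (C ((-1 : ℤ) ^ t.card * ((∏ j ∈ t, (j + 1) : ℕ) : ℤ) ^ 2) * (X 1) ^ t.card *
        (X 0) ^ (2 * (N - t.card) + 1) : MvPolynomial (Fin 2) ℤ) =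
      C ((-1 : ℤ) ^ t.card) * (C (((∏ j ∈ t, (j + 1) : ℕ) : ℤ) ^ 2) * (X 1) ^ t.card *
        (X 0) ^ (2 * (N - t.card) + 1)) := by
    rw [C_mul]
    ring
  rw [hre]
  exact mul_mem (hCmem _) happ

/-- `M_N` is a polynomial with integer coefficients in `D_0, …, D_N`. -/
theorem stmt15 (N : ℕ) :
    ∃ P : MvPolynomial (Fin (N + 1)) ℤ,
      MvPolynomial.aeval (fun k : Fin (N + 1) => Dop (k : ℕ)) P = Mop N := by
  have h := Mop_mem N
  have hset : Dop '' Set.Iic N = Set.range (fun k : Fin (N + 1) => Dop (k : ℕ)) := by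
    ext p
    constructor
    · rintro ⟨k, hk, rfl⟩
      exact ⟨⟨k, Nat.lt_succ_of_le hk⟩, rfl⟩
    · rintro ⟨k, rfl⟩
      exact ⟨(k : ℕ), Nat.lt_succ_iff.mp k.2, rfl⟩
  rw [hset, Algebra.adjoin_range_eq_range_aeval] at h
  obtain ⟨P, hP⟩ := h
  exact ⟨P, hP⟩
end
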